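/- Let R be a Noetherian ring, J an ideal, and z an element of R. If J : z^∞ = J : z^N for some N, then J = (J + R z^N) ∩ (J : z^∞). -/
import Mathlib


/-- If `J : z^∞ = J : z^N` for some `N`, then
`J = (J + R z^N) ∩ (J : z^∞)`. -/
theorem stmt2 {R : Type*} [CommRing R] [IsNoetherianRing R] (J : Ideal R) (z : R) (N : ℕ)
    (hN : (⨆ n : ℕ, J.colon (Ideal.span {z ^ n})) = J.colon (Ideal.span {z ^ N})) :
    J = (J ⊔ Ideal.span {z ^ N}) ⊓ ⨆ n : ℕ, J.colon (Ideal.span {z ^ n}) := by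
  apply le_antisymm
  · refine le_inf (le_trans le_sup_left le_rfl) ?_
    refine le_trans ?_ (le_iSup _ 0)
    intro x hx
    rw [Ideal.mem_colon_span_singleton]
    exact J.mul_mem_right _ hx
  · intro x hx
    obtain ⟨hx1, hx2⟩ := Submodule.mem_inf.mp hx
    rw [hN, Ideal.mem_colon_span_singleton] at hx2
    obtain ⟨j, hj, y, hy, rfl⟩ := Submodule.mem_sup.mp hx1
    obtain ⟨r, rfl⟩ := Ideal.mem_span_singleton'.mp hy
    have hr2 : r * z ^ (2 * N) ∈ J := by
      have : (j + r * z ^ N) * z ^ N = j * z ^ N + r * z ^ (2 * N) := by ring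
      have h := J.sub_mem hx2 (J.mul_mem_right (z ^ N) hj)
      rw [this] at h
      simpa using h
    have hr : r ∈ J.colon (Ideal.span {z ^ N}) := by
      rw [← hN]
      refine le_iSup (fun n => J.colon (Ideal.span {z ^ n})) (2 * N) ?_
      rw [Ideal.mem_colon_span_singleton]
      exact hr2
    rw [Ideal.mem_colon_span_singleton] at hr
    exact J.add_mem hj hr
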